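/- For all p = (s₁, y₁) and q = (s₂, y₂) in [0, ∞) × ℝ one has |K(q, q) − K(p, q)| ≤ √2 · λ(1/μ² + β²) · ‖p − q‖ and, consequently, K(p, p) − 2K(p, q) + K(q, q) ≤ 2√2 · λ(1/μ² + β²) · ‖p − q‖, where ‖·‖ denotes the Euclidean norm on ℝ². -/

import Mathlib

open MeasureTheory Filter Set

section Stmt8Aux

noncomputable def KInt (G : ℝ → ℝ) (mu beta a b x : ℝ) : ℝ :=
  ((1 / mu ^ 2) * G (a + x) + beta ^ 2) * (1 - G (b + x))

lemma KInt_nonneg (G : ℝ → ℝ) (hG0 : ∀ y, 0 ≤ G y) (hG1 : ∀ y, G y ≤ 1)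
    (mu beta a b x : ℝ) : 0 ≤ KInt G mu beta a b x := by
  have h1 := hG0 (a + x); have h2 := hG1 (b + x)
  have h5 : (0:ℝ) ≤ 1 / mu ^ 2 := by positivity
  have h6 : (0:ℝ) ≤ beta ^ 2 := sq_nonneg beta
  unfold KInt
  exact mul_nonneg (by nlinarith) (by linarith)

lemma KInt_le (G : ℝ → ℝ) (hG0 : ∀ y, 0 ≤ G y) (hG1 : ∀ y, G y ≤ 1)
    (mu beta a b x : ℝ) : KInt G mu beta a b x ≤ 1 / mu ^ 2 + beta ^ 2 := by
  have h1 := hG0 (a + x); have h2 := hG1 (a + x)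
  have h3 := hG0 (b + x); have h4 := hG1 (b + x)
  have h5 : (0:ℝ) ≤ 1 / mu ^ 2 := by positivity
  have h6 : (0:ℝ) ≤ beta ^ 2 := sq_nonneg beta
  unfold KInt
  nlinarith [mul_nonneg h5 (by linarith : (0:ℝ) ≤ 1 - G (a + x)),
    mul_nonneg (by nlinarith : (0:ℝ) ≤ 1 / mu ^ 2 * G (a + x) + beta ^ 2) h3]

lemma KInt_integrable (G : ℝ → ℝ) (hmono : Monotone G) (hG0 : ∀ y, 0 ≤ G y)
    (hG1 : ∀ y, G y ≤ 1) (mu beta a b u v : ℝ) :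
    IntervalIntegrable (KInt G mu beta a b) volume u v := by
  have hG : Measurable G := hmono.measurable
  have hmeas : Measurable (KInt G mu beta a b) := by
    unfold KInt
    exact ((measurable_const.mul (hG.comp (measurable_const_add a))).add
      measurable_const).mul (measurable_const.sub (hG.comp (measurable_const_add b)))
  rw [intervalIntegrable_iff]
  refine Integrable.mono' (g := fun _ => 1 / mu ^ 2 + beta ^ 2) ?_ hmeas.aestronglyMeasurable ?_
  · exact integrableOn_const measure_Ioc_lt_top.ne
  · filter_upwards with x
    rw [Real.norm_eq_abs, abs_le]
    constructor
    · have := KInt_nonneg G hG0 hG1 mu beta a b x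
      have : (0:ℝ) ≤ 1 / mu ^ 2 + beta ^ 2 := by positivity
      linarith [KInt_nonneg G hG0 hG1 mu beta a b x]
    · exact KInt_le G hG0 hG1 mu beta a b x

lemma translate_sub (G : ℝ → ℝ) (hmono : Monotone G) (hG0 : ∀ y, 0 ≤ G y)
    (hG1 : ∀ y, G y ≤ 1) (a b T : ℝ) (hab : a ≤ b) (hT : 0 ≤ T) :
    ∫ x in (0:ℝ)..T, (G (b + x) - G (a + x)) ≤ b - a := by
  have hib : ∀ c : ℝ, Monotone fun x => G (c + x) :=
    fun c => hmono.comp fun x y h => add_le_add_right h c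
  have h1 : ∀ c : ℝ, (∫ x in (0:ℝ)..T, G (c + x)) = ∫ x in c..(T + c), G x := by
    intro c
    have := intervalIntegral.integral_comp_add_right (a := (0:ℝ)) (b := T) (fun x => G x) c
    simpa [add_comm] using this
  rw [intervalIntegral.integral_sub ((hib b).intervalIntegrable)
    ((hib a).intervalIntegrable), h1, h1]
  have hGint : ∀ u v : ℝ, IntervalIntegrable G volume u v := fun u v =>
    hmono.intervalIntegrable
  have e1 : (∫ x in a..(T + a), G x) + ∫ x in (T + a)..(T + b), G x
      = ∫ x in a..(T + b), G x :=
    intervalIntegral.integral_add_adjacent_intervals (hGint _ _) (hGint _ _)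
  have e2 : (∫ x in a..b, G x) + ∫ x in b..(T + b), G x = ∫ x in a..(T + b), G x :=
    intervalIntegral.integral_add_adjacent_intervals (hGint _ _) (hGint _ _)
  have b1 : (∫ x in (T + a)..(T + b), G x) ≤ b - a := by
    calc (∫ x in (T + a)..(T + b), G x) ≤ ∫ _x in (T + a)..(T + b), (1:ℝ) :=
          intervalIntegral.integral_mono_on (by linarith) (hGint _ _)
            intervalIntegrable_const (fun x _ => hG1 x)
      _ = b - a := by simp
  have b2 : (0:ℝ) ≤ ∫ x in a..b, G x :=
    intervalIntegral.integral_nonneg hab (fun x _ => hG0 x)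
  linarith

lemma abs_add_le_sqrt_two (a b : ℝ) :
    |a| + |b| ≤ Real.sqrt 2 * Real.sqrt (a ^ 2 + b ^ 2) := by
  rw [← Real.sqrt_mul (by norm_num : (0:ℝ) ≤ 2)]
  have h : 0 ≤ |a| + |b| := by positivity
  calc |a| + |b| = Real.sqrt ((|a| + |b|) ^ 2) := (Real.sqrt_sq h).symm
    _ ≤ Real.sqrt (2 * (a ^ 2 + b ^ 2)) := by
        apply Real.sqrt_le_sqrt
        nlinarith [sq_nonneg (|a| - |b|), sq_abs a, sq_abs b]

lemma KInt_pointwise (G : ℝ → ℝ) (hmono : Monotone G) (hG0 : ∀ y, 0 ≤ G y)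
    (hG1 : ∀ y, G y ≤ 1) (mu beta m y M x : ℝ) (h1 : m ≤ y) (h2 : y ≤ M) :
    0 ≤ KInt G mu beta y y x - KInt G mu beta m M x ∧
    KInt G mu beta y y x - KInt G mu beta m M x
      ≤ (1 / mu ^ 2 + beta ^ 2) * (G (M + x) - G (m + x)) := by
  have hu := hG0 (m + x)
  have hv := hG1 (M + x)
  have huw : G (m + x) ≤ G (y + x) := hmono (by linarith)
  have hwv : G (y + x) ≤ G (M + x) := hmono (by linarith)
  have h5 : (0:ℝ) ≤ 1 / mu ^ 2 := by positivity
  have h6 : (0:ℝ) ≤ beta ^ 2 := sq_nonneg beta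
  unfold KInt
  have hw0 := hG0 (y + x)
  have hw1 : G (y + x) ≤ 1 := le_trans hwv hv
  have hu1 : G (m + x) ≤ 1 := le_trans huw hw1
  constructor
  · nlinarith [mul_nonneg h5 (mul_nonneg (sub_nonneg.2 huw) (by linarith : (0:ℝ) ≤ 1 - G (y + x))),
      mul_nonneg h5 (mul_nonneg hu (sub_nonneg.2 hwv)),
      mul_nonneg h6 (sub_nonneg.2 hwv)]
  · nlinarith [mul_nonneg h5 (mul_nonneg (sub_nonneg.2 hwv) (by linarith : (0:ℝ) ≤ 1 - G (m + x))),
      mul_nonneg h5 (mul_nonneg hw0 (sub_nonneg.2 huw)),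
      mul_nonneg h6 (sub_nonneg.2 huw)]

lemma key_bound (G : ℝ → ℝ) (hmono : Monotone G) (hG0 : ∀ y, 0 ≤ G y)
    (hG1 : ∀ y, G y ≤ 1) (mu beta : ℝ) (s₁ y₁ s₂ y₂ : ℝ)
    (hs₁ : 0 ≤ s₁) (hs₂ : 0 ≤ s₂) :
    0 ≤ (∫ x in (0:ℝ)..s₂, KInt G mu beta y₂ y₂ x)
        - ∫ x in (0:ℝ)..(min s₁ s₂), KInt G mu beta (min y₁ y₂) (max y₁ y₂) x ∧
    (∫ x in (0:ℝ)..s₂, KInt G mu beta y₂ y₂ x)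
        - (∫ x in (0:ℝ)..(min s₁ s₂), KInt G mu beta (min y₁ y₂) (max y₁ y₂) x)
      ≤ (1 / mu ^ 2 + beta ^ 2) * (|s₁ - s₂| + |y₁ - y₂|) := by
  set C := 1 / mu ^ 2 + beta ^ 2 with hC
  have hC0 : 0 ≤ C := by rw [hC]; positivity
  set T := min s₁ s₂ with hTdef
  set m := min y₁ y₂ with hm
  set M := max y₁ y₂ with hM
  have hTs : T ≤ s₂ := min_le_right _ _
  have hT0 : 0 ≤ T := le_min hs₁ hs₂
  have hmy : m ≤ y₂ := min_le_right _ _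
  have hyM : y₂ ≤ M := le_max_right _ _
  have hmM : m ≤ M := le_trans hmy hyM
  have hint : ∀ a b u v : ℝ, IntervalIntegrable (KInt G mu beta a b) volume u v :=
    fun a b u v => KInt_integrable G hmono hG0 hG1 mu beta a b u v
  -- tail part
  have hA_def : (∫ x in (0:ℝ)..s₂, KInt G mu beta y₂ y₂ x)
      - (∫ x in (0:ℝ)..T, KInt G mu beta y₂ y₂ x)
      = ∫ x in T..s₂, KInt G mu beta y₂ y₂ x :=
    intervalIntegral.integral_interval_sub_left (hint _ _ _ _) (hint _ _ _ _)
  have hA0 : 0 ≤ ∫ x in T..s₂, KInt G mu beta y₂ y₂ x :=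
    intervalIntegral.integral_nonneg hTs (fun x _ => KInt_nonneg G hG0 hG1 mu beta _ _ x)
  have hA1 : (∫ x in T..s₂, KInt G mu beta y₂ y₂ x) ≤ C * (s₂ - T) := by
    calc (∫ x in T..s₂, KInt G mu beta y₂ y₂ x) ≤ ∫ _x in T..s₂, C :=
          intervalIntegral.integral_mono_on hTs (hint _ _ _ _) intervalIntegrable_const
            (fun x _ => KInt_le G hG0 hG1 mu beta _ _ x)
      _ = C * (s₂ - T) := by rw [intervalIntegral.integral_const, smul_eq_mul, mul_comm]
  have hsT : s₂ - T ≤ |s₁ - s₂| := by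
    rw [abs_sub_comm]
    rcases le_total s₁ s₂ with h | h
    · rw [hTdef, min_eq_left h]; exact le_abs_self _
    · rw [hTdef, min_eq_right h]; simp [abs_nonneg]
  -- middle part
  have hib : ∀ c : ℝ, Monotone fun x => G (c + x) :=
    fun c => hmono.comp fun x y h => add_le_add_right h c
  have hint2 : IntervalIntegrable (fun x => G (M + x) - G (m + x)) volume 0 T :=
    ((hib M).intervalIntegrable).sub ((hib m).intervalIntegrable)
  have hB_def : (∫ x in (0:ℝ)..T, (KInt G mu beta y₂ y₂ x - KInt G mu beta m M x))
      = (∫ x in (0:ℝ)..T, KInt G mu beta y₂ y₂ x)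
        - ∫ x in (0:ℝ)..T, KInt G mu beta m M x :=
    intervalIntegral.integral_sub (hint _ _ _ _) (hint _ _ _ _)
  have hB0 : 0 ≤ ∫ x in (0:ℝ)..T, (KInt G mu beta y₂ y₂ x - KInt G mu beta m M x) :=
    intervalIntegral.integral_nonneg hT0
      (fun x _ => (KInt_pointwise G hmono hG0 hG1 mu beta m y₂ M x hmy hyM).1)
  have hB1 : (∫ x in (0:ℝ)..T, (KInt G mu beta y₂ y₂ x - KInt G mu beta m M x))
      ≤ C * (M - m) := by
    calc (∫ x in (0:ℝ)..T, (KInt G mu beta y₂ y₂ x - KInt G mu beta m M x))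
        ≤ ∫ x in (0:ℝ)..T, C * (G (M + x) - G (m + x)) := by
          refine intervalIntegral.integral_mono_on hT0 ((hint _ _ _ _).sub (hint _ _ _ _))
            (hint2.const_mul C)
            (fun x _ => (KInt_pointwise G hmono hG0 hG1 mu beta m y₂ M x hmy hyM).2)
      _ = C * ∫ x in (0:ℝ)..T, (G (M + x) - G (m + x)) := by
          rw [intervalIntegral.integral_const_mul]
      _ ≤ C * (M - m) :=
          mul_le_mul_of_nonneg_left (translate_sub G hmono hG0 hG1 m M T hmM hT0) hC0
  have hMm : M - m = |y₁ - y₂| := by rw [hM, hm, max_sub_min_eq_abs, abs_sub_comm]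
  constructor
  · linarith
  · have h1 : C * (s₂ - T) ≤ C * |s₁ - s₂| := mul_le_mul_of_nonneg_left hsT hC0
    have h2 : C * (M - m) = C * |y₁ - y₂| := by rw [hMm]
    nlinarith

end Stmt8Aux

/-- for `p = (s₁, y₁)`, `q = (s₂, y₂)` in `[0, ∞) × ℝ`,
`|K(q,q) - K(p,q)| ≤ √2·λ(1/μ² + β²)·‖p - q‖` and hence
`K(p,p) - 2K(p,q) + K(q,q) ≤ 2√2·λ(1/μ² + β²)·‖p - q‖` (Euclidean norm on ℝ²). -/
theorem stmt_8
    (G : ℝ → ℝ) (hmono : Monotone G)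
    (hG0 : ∀ y, 0 ≤ G y) (hG1 : ∀ y, G y ≤ 1)
    (lam mu beta : ℝ) (hlam : 0 < lam) (hmu : 0 < mu) (hbeta : 0 ≤ beta)
    (K : ℝ × ℝ → ℝ × ℝ → ℝ)
    (hK : ∀ p q : ℝ × ℝ, K p q = lam * ∫ x in (0 : ℝ)..(min p.1 q.1),
        ((1 / mu ^ 2) * G (min p.2 q.2 + x) + beta ^ 2) * (1 - G (max p.2 q.2 + x))) :
    ∀ p q : ℝ × ℝ, 0 ≤ p.1 → 0 ≤ q.1 →
      |K q q - K p q| ≤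
          Real.sqrt 2 * (lam * (1 / mu ^ 2 + beta ^ 2)) *
            Real.sqrt ((p.1 - q.1) ^ 2 + (p.2 - q.2) ^ 2) ∧
      K p p - 2 * K p q + K q q ≤
          2 * Real.sqrt 2 * (lam * (1 / mu ^ 2 + beta ^ 2)) *
            Real.sqrt ((p.1 - q.1) ^ 2 + (p.2 - q.2) ^ 2) := by
  have hC0 : (0:ℝ) ≤ 1 / mu ^ 2 + beta ^ 2 := by positivity
  have first : ∀ s₁ y₁ s₂ y₂ : ℝ, 0 ≤ s₁ → 0 ≤ s₂ →
      |K (s₂, y₂) (s₂, y₂) - K (s₁, y₁) (s₂, y₂)| ≤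
        Real.sqrt 2 * (lam * (1 / mu ^ 2 + beta ^ 2)) *
          Real.sqrt ((s₁ - s₂) ^ 2 + (y₁ - y₂) ^ 2) := by
    intro s₁ y₁ s₂ y₂ hs₁ hs₂
    have eq1 : K (s₂, y₂) (s₂, y₂) = lam * ∫ x in (0:ℝ)..s₂, KInt G mu beta y₂ y₂ x := by
      rw [hK]; simp [KInt]
    have eq2 : K (s₁, y₁) (s₂, y₂) = lam * ∫ x in (0:ℝ)..(min s₁ s₂),
        KInt G mu beta (min y₁ y₂) (max y₁ y₂) x := by
      rw [hK]; simp [KInt]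
    obtain ⟨hk0, hk1⟩ := key_bound G hmono hG0 hG1 mu beta s₁ y₁ s₂ y₂ hs₁ hs₂
    rw [eq1, eq2, ← mul_sub, abs_mul, abs_of_pos hlam, abs_of_nonneg hk0]
    have habs := abs_add_le_sqrt_two (s₁ - s₂) (y₁ - y₂)
    calc lam * ((∫ x in (0:ℝ)..s₂, KInt G mu beta y₂ y₂ x)
          - ∫ x in (0:ℝ)..(min s₁ s₂), KInt G mu beta (min y₁ y₂) (max y₁ y₂) x)
        ≤ lam * ((1 / mu ^ 2 + beta ^ 2) * (|s₁ - s₂| + |y₁ - y₂|)) :=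
          mul_le_mul_of_nonneg_left hk1 hlam.le
      _ ≤ lam * ((1 / mu ^ 2 + beta ^ 2) *
            (Real.sqrt 2 * Real.sqrt ((s₁ - s₂) ^ 2 + (y₁ - y₂) ^ 2))) := by
          apply mul_le_mul_of_nonneg_left _ hlam.le
          exact mul_le_mul_of_nonneg_left habs hC0
      _ = Real.sqrt 2 * (lam * (1 / mu ^ 2 + beta ^ 2)) *
            Real.sqrt ((s₁ - s₂) ^ 2 + (y₁ - y₂) ^ 2) := by ring
  rintro ⟨s₁, y₁⟩ ⟨s₂, y₂⟩ hp hq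
  simp only at hp hq ⊢
  have f2 := first s₁ y₁ s₂ y₂ hp hq
  refine ⟨f2, ?_⟩
  have hsym : K (s₁, y₁) (s₂, y₂) = K (s₂, y₂) (s₁, y₁) := by
    rw [hK, hK]; simp [min_comm, max_comm]
  have f1 := first s₂ y₂ s₁ y₁ hq hp
  have hsq : ((s₂ - s₁) ^ 2 + (y₂ - y₁) ^ 2) = ((s₁ - s₂) ^ 2 + (y₁ - y₂) ^ 2) := by ring
  rw [hsq] at f1
  have a1 := le_abs_self (K (s₁, y₁) (s₁, y₁) - K (s₂, y₂) (s₁, y₁))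
  have a2 := le_abs_self (K (s₂, y₂) (s₂, y₂) - K (s₁, y₁) (s₂, y₂))
  rw [hsym]
  linarith
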